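/- If f : C → D is a chain homotopy equivalence of chain complexes of R-modules, then the mapping cone of f is chain contractible. -/

import Mathlib

/-- The mapping cone of a chain homotopy equivalence is chain contractible.
Here `cone(f)` in degree `i+1` is `D (i+1) × C i` with differential
`(y, x) ↦ (d y + f x, -d x)`, and a contraction is a degree `+1` map `s`
with `ds + sd = 1`. -/
theorem stmt_2 (R : Type*) [Ring R]
    (C D : ℤ → Type*) [∀ i, AddCommGroup (C i)] [∀ i, Module R (C i)]
    [∀ i, AddCommGroup (D i)] [∀ i, Module R (D i)]
    (dC : ∀ i, C (i + 1) →ₗ[R] C i) (dD : ∀ i, D (i + 1) →ₗ[R] D i)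
    (hdC : ∀ i (x : C (i + 1 + 1)), dC i (dC (i + 1) x) = 0)
    (hdD : ∀ i (y : D (i + 1 + 1)), dD i (dD (i + 1) y) = 0)
    (f : ∀ i, C i →ₗ[R] D i)
    (hf : ∀ i (x : C (i + 1)), f i (dC i x) = dD i (f (i + 1) x))
    -- `f` is a chain homotopy equivalence, with homotopy inverse `f'`
    (f' : ∀ i, D i →ₗ[R] C i)
    (hf' : ∀ i (y : D (i + 1)), f' i (dD i y) = dC i (f' (i + 1) y))
    (k₁ : ∀ i, C i →ₗ[R] C (i + 1))
    (hk₁ : ∀ i (x : C (i + 1)),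
      dC (i + 1) (k₁ (i + 1) x) + k₁ i (dC i x) = x - f' (i + 1) (f (i + 1) x))
    (k₂ : ∀ i, D i →ₗ[R] D (i + 1))
    (hk₂ : ∀ i (y : D (i + 1)),
      dD (i + 1) (k₂ (i + 1) y) + k₂ i (dD i y) = y - f (i + 1) (f' (i + 1) y)) :
    -- conclusion : `cone(f)` admits a chain contraction
    ∃ s : ∀ i, (D (i + 1) × C i) →ₗ[R] (D (i + 1 + 1) × C (i + 1)),
      ∀ i (y : D (i + 1 + 1)) (x : C (i + 1)),
        (dD (i + 1 + 1) (s (i + 1) (y, x)).1 + f (i + 1 + 1) (s (i + 1) (y, x)).2,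
            -(dC (i + 1) (s (i + 1) (y, x)).2))
          + s i (dD (i + 1) y + f (i + 1) x, -(dC i x)) = (y, x) := by
  -- θ i = f (i+1) ∘ k₁ i - k₂ i ∘ f i  (a degree +1 "chain map")
  -- s i (y, x) = (k₂ (i+1) y + θ (i+1) (f' (i+1) y) - θ (i+1) (k₁ i x),
  --               f' (i+1) y - k₁ i x)
  refine ⟨fun i =>
    LinearMap.prod
      ((k₂ (i + 1) +
          (f (i + 1 + 1) ∘ₗ k₁ (i + 1) - k₂ (i + 1) ∘ₗ f (i + 1)) ∘ₗ f' (i + 1)) ∘ₗ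
            LinearMap.fst R (D (i + 1)) (C i) -
        ((f (i + 1 + 1) ∘ₗ k₁ (i + 1) - k₂ (i + 1) ∘ₗ f (i + 1)) ∘ₗ k₁ i) ∘ₗ
            LinearMap.snd R (D (i + 1)) (C i))
      (f' (i + 1) ∘ₗ LinearMap.fst R (D (i + 1)) (C i) -
        k₁ i ∘ₗ LinearMap.snd R (D (i + 1)) (C i)), ?_⟩
  intro i y x
  have hk₁' : ∀ i (z : C (i + 1)),
      dC (i + 1) (k₁ (i + 1) z) = z - f' (i + 1) (f (i + 1) z) - k₁ i (dC i z) :=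
    fun i z => eq_sub_of_add_eq (hk₁ i z)
  have hk₂' : ∀ i (z : D (i + 1)),
      dD (i + 1) (k₂ (i + 1) z) = z - f (i + 1) (f' (i + 1) z) - k₂ i (dD i z) :=
    fun i z => eq_sub_of_add_eq (hk₂ i z)
  simp only [LinearMap.prod_apply, Function.prod, LinearMap.coe_comp, Function.comp_apply,
    LinearMap.add_apply, LinearMap.sub_apply, LinearMap.fst_apply, LinearMap.snd_apply,
    map_add, map_sub, map_neg, Prod.mk_add_mk, Prod.mk.injEq]
  constructor
  · simp only [hk₂', hk₁', ← hf, ← hf', hdD, hdC, map_add, map_sub, map_neg, map_zero]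
    abel
  · simp only [hk₂', hk₁', ← hf, ← hf', hdD, hdC, map_add, map_sub, map_neg, map_zero]
    abel
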